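/- Let 𝒜 be an operator algebra with a bounded approximate unit and π : 𝒜 → B(H) a bounded algebra homomorphism into the bounded operators on a complex Hilbert space H. Then H is the (in general non-orthogonal) topological direct sum of the closed subspace [π(𝒜)H] (the closed linear span of {π(a)h : a ∈ 𝒜, h ∈ H}) and the closed subspace [π(𝒜)*H]^⊥ (the orthogonal complement of the closed linear span of {π(a)*h : a ∈ 𝒜, h ∈ H}); that is, these two closed subspaces intersect trivially and their sum is all of H. -/

import Mathlib

set_option synthInstance.maxHeartbeats 1000000
set_option maxHeartbeats 1000000

open Filter Topology

open scoped InnerProductSpace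

/-- Let `𝒜` be an operator algebra with a bounded approximate unit and
`π : 𝒜 → B(H)` a bounded algebra homomorphism into the bounded operators on a complex
Hilbert space `H`.  Then `H` is the (in general non-orthogonal) topological direct sum of
the closed subspace `[π(𝒜)H]` (the closed linear span of `{π(a)h}`) and the closed subspace
`[π(𝒜)*H]^⊥`: these two closed subspaces intersect trivially and their sum is all of `H`. -/
theorem statement1
    {H₀ H : Type*} [NormedAddCommGroup H₀] [InnerProductSpace ℂ H₀] [CompleteSpace H₀]
    [NormedAddCommGroup H] [InnerProductSpace ℂ H] [CompleteSpace H]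
    -- the operator algebra 𝒜 : a closed (not necessarily unital) subalgebra of B(H₀)
    (A : NonUnitalSubalgebra ℂ (H₀ →L[ℂ] H₀)) (hA : IsClosed (A : Set (H₀ →L[ℂ] H₀)))
    -- a bounded approximate unit (u_λ), indexed by a directed set ι
    {ι : Type*} [Preorder ι] [IsDirected ι (· ≤ ·)] [Nonempty ι]
    (u : ι → A) (C : ℝ) (huC : ∀ l, ‖u l‖ ≤ C)
    (hu_left : ∀ a : A, Tendsto (fun l => ‖u l * a - a‖) atTop (𝓝 0))
    (hu_right : ∀ a : A, Tendsto (fun l => ‖a * u l - a‖) atTop (𝓝 0))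
    -- a bounded (continuous linear, multiplicative) representation π : 𝒜 → B(H)
    (π : A →L[ℂ] (H →L[ℂ] H)) (hπ : ∀ a b : A, π (a * b) = π a * π b) :
    -- S₁ = [π(𝒜)H],  S₂ = [π(𝒜)*H]^⊥
    (Submodule.span ℂ {x : H | ∃ (a : A) (h : H), π a h = x}).topologicalClosure ⊓
      ((Submodule.span ℂ
        {x : H | ∃ (a : A) (h : H), ContinuousLinearMap.adjoint (π a) h = x}).topologicalClosure)ᗮ
      = ⊥ ∧
    (Submodule.span ℂ {x : H | ∃ (a : A) (h : H), π a h = x}).topologicalClosure ⊔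
      ((Submodule.span ℂ
        {x : H | ∃ (a : A) (h : H), ContinuousLinearMap.adjoint (π a) h = x}).topologicalClosure)ᗮ
      = ⊤ := by
  classical
  letI : NormedSpace ℂ A := { norm_smul_le := fun c x => norm_smul_le c (x : H₀ →L[ℂ] H₀) }
  set gen₁ : Set H := {x : H | ∃ (a : A) (h : H), π a h = x} with hgen₁
  set gen₂ : Set H := {x : H | ∃ (a : A) (h : H), ContinuousLinearMap.adjoint (π a) h = x}
    with hgen₂
  set S₁ : Submodule ℂ H := (Submodule.span ℂ gen₁).topologicalClosure with hS₁
  set S₂ : Submodule ℂ H := (Submodule.span ℂ gen₂).topologicalClosure with hS₂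
  set M : ℝ := ‖π‖ * C with hMdef
  have hC : (0:ℝ) ≤ C := le_trans (norm_nonneg _) (huC (Classical.arbitrary ι))
  have hM : (0:ℝ) ≤ M := mul_nonneg (norm_nonneg π) hC
  have hbound : ∀ (l : ι) (w : H), ‖π (u l) w‖ ≤ M * ‖w‖ := by
    intro l w
    calc ‖π (u l) w‖ ≤ ‖π (u l)‖ * ‖w‖ := (π (u l)).le_opNorm w
      _ ≤ M * ‖w‖ := by
        apply mul_le_mul_of_nonneg_right _ (norm_nonneg w)
        calc ‖π (u l)‖ ≤ ‖π‖ * ‖u l‖ := π.le_opNorm (u l)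
          _ ≤ ‖π‖ * C := mul_le_mul_of_nonneg_left (huC l) (norm_nonneg π)
  -- characterization of S₂ᗮ
  have h2 : ∀ z : H, z ∈ S₂ᗮ ↔ ∀ a : A, π a z = 0 := by
    intro z
    constructor
    · intro hz a
      have key : ContinuousLinearMap.adjoint (π a) (π a z) ∈ S₂ := by
        apply Submodule.le_topologicalClosure
        exact Submodule.subset_span ⟨a, π a z, rfl⟩
      have h0 : ⟪ContinuousLinearMap.adjoint (π a) (π a z), z⟫_ℂ = 0 :=
        (Submodule.mem_orthogonal S₂ z).mp hz _ key
      rw [ContinuousLinearMap.adjoint_inner_left] at h0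
      exact inner_self_eq_zero.mp h0
    · intro hz
      rw [Submodule.mem_orthogonal]
      intro w hw
      have hker : S₂ ≤ LinearMap.ker ((innerSL ℂ z : H →L[ℂ] ℂ) : H →ₗ[ℂ] ℂ) := by
        apply Submodule.topologicalClosure_minimal
        · rw [Submodule.span_le]
          rintro _ ⟨a, h, rfl⟩
          simp only [SetLike.mem_coe, LinearMap.mem_ker, ContinuousLinearMap.coe_coe, innerSL_apply_apply]
          rw [← inner_conj_symm, ContinuousLinearMap.adjoint_inner_left, hz a,
            inner_zero_right, map_zero]
        · exact ContinuousLinearMap.isClosed_ker (innerSL ℂ z)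
      have := hker hw
      rw [LinearMap.mem_ker, ContinuousLinearMap.coe_coe, innerSL_apply_apply] at this
      rw [← inner_eq_zero_symm] at this
      exact this
  -- convergence on the span
  have hspan : ∀ y ∈ Submodule.span ℂ gen₁, Tendsto (fun l => π (u l) y) atTop (𝓝 y) := by
    intro y hy
    induction hy using Submodule.span_induction with
    | mem x hx =>
      obtain ⟨a, h, rfl⟩ := hx
      have h1 : Tendsto (fun l => u l * a) atTop (𝓝 a) :=
        tendsto_iff_norm_sub_tendsto_zero.mpr (hu_left a)
      have hcont : Continuous fun b : A => π b h :=
        (ContinuousLinearMap.apply ℂ H h).continuous.comp π.continuous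
      have h2' : Tendsto (fun l => π (u l * a) h) atTop (𝓝 (π a h)) :=
        (hcont.tendsto a).comp h1
      refine h2'.congr fun l => ?_
      rw [hπ, ContinuousLinearMap.mul_apply]
    | zero => simpa using tendsto_const_nhds
    | add x y hx hy ihx ihy =>
      simpa [map_add] using ihx.add ihy
    | smul c x hx ihx =>
      simpa [map_smul] using ihx.const_smul c
  -- convergence on the closure
  have h3 : ∀ x ∈ S₁, Tendsto (fun l => π (u l) x) atTop (𝓝 x) := by
    intro x hx
    have hx' : x ∈ closure (Submodule.span ℂ gen₁ : Set H) := hx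
    rw [Metric.tendsto_nhds]
    intro ε hε
    have hδ : (0:ℝ) < ε / (2 * (M + 1)) := by positivity
    obtain ⟨y, hy, hdist⟩ := Metric.mem_closure_iff.mp hx' _ hδ
    have h4 := hspan y hy
    rw [Metric.tendsto_nhds] at h4
    filter_upwards [h4 (ε / 2) (by positivity)] with l hl
    have e1 : π (u l) x - x = π (u l) (x - y) + (π (u l) y - y) + (y - x) := by
      simp only [map_sub]; abel
    have hxy : ‖x - y‖ < ε / (2 * (M + 1)) := by
      rw [← dist_eq_norm]; exact hdist
    have : ‖π (u l) x - x‖ ≤ M * ‖x - y‖ + ‖π (u l) y - y‖ + ‖x - y‖ := by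
      rw [e1]
      calc ‖π (u l) (x - y) + (π (u l) y - y) + (y - x)‖
          ≤ ‖π (u l) (x - y) + (π (u l) y - y)‖ + ‖y - x‖ := norm_add_le _ _
        _ ≤ ‖π (u l) (x - y)‖ + ‖π (u l) y - y‖ + ‖y - x‖ := by
            gcongr; exact norm_add_le _ _
        _ ≤ M * ‖x - y‖ + ‖π (u l) y - y‖ + ‖x - y‖ := by
            rw [norm_sub_rev y x]; gcongr; exact hbound l _
    rw [dist_eq_norm]
    have h5 : ‖π (u l) y - y‖ < ε / 2 := by rw [← dist_eq_norm]; exact hl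
    have h6 : M * ‖x - y‖ + ‖x - y‖ < ε / 2 := by
      have : M * ‖x - y‖ + ‖x - y‖ = (M + 1) * ‖x - y‖ := by ring
      rw [this]
      calc (M + 1) * ‖x - y‖ < (M + 1) * (ε / (2 * (M + 1))) := by
            apply mul_lt_mul_of_pos_left hxy; linarith
        _ = ε / 2 := by field_simp
    linarith
  constructor
  · -- trivial intersection
    rw [Submodule.eq_bot_iff]
    rintro x ⟨hx1, hx2⟩
    have hz : ∀ l, π (u l) x = 0 := fun l => (h2 x).mp hx2 (u l)
    have : Tendsto (fun _ : ι => (0:H)) atTop (𝓝 x) := (h3 x hx1).congr fun l => (hz l)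
    exact tendsto_nhds_unique this tendsto_const_nhds
  · -- the sum is everything
    rw [Submodule.eq_top_iff']
    intro x
    set U : Ultrafilter ι := Ultrafilter.of atTop with hUdef
    have hU : (U : Filter ι) ≤ atTop := Ultrafilter.of_le _
    set v : ι → H := fun l => π (u l) x with hvdef
    set R : ℝ := M * ‖x‖ with hRdef
    have hvb : ∀ l, ‖v l‖ ≤ R := fun l => hbound l x
    -- limits of inner products along the ultrafilter
    have hlim : ∀ y : H, ∃ z : ℂ, Tendsto (fun l => ⟪y, v l⟫_ℂ) U (𝓝 z) ∧ ‖z‖ ≤ R * ‖y‖ := by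
      intro y
      have hmem : ∀ l, ⟪y, v l⟫_ℂ ∈ Metric.closedBall (0:ℂ) (R * ‖y‖) := by
        intro l
        rw [Metric.mem_closedBall, dist_zero_right]
        calc ‖⟪y, v l⟫_ℂ‖ ≤ ‖y‖ * ‖v l‖ := norm_inner_le_norm y (v l)
          _ ≤ ‖y‖ * R := mul_le_mul_of_nonneg_left (hvb l) (norm_nonneg y)
          _ = R * ‖y‖ := mul_comm _ _
      have hle : (U.map fun l => ⟪y, v l⟫_ℂ : Filter ℂ) ≤ 𝓟 (Metric.closedBall 0 (R * ‖y‖)) := by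
        rw [Filter.le_principal_iff]
        exact Filter.mem_map.mpr (Filter.univ_mem' hmem)
      obtain ⟨z, hzmem, hz⟩ := (isCompact_closedBall (0:ℂ) (R * ‖y‖)).ultrafilter_le_nhds
        (U.map fun l => ⟪y, v l⟫_ℂ) hle
      refine ⟨z, hz, ?_⟩
      rw [Metric.mem_closedBall, dist_zero_right] at hzmem
      exact hzmem
    choose f hf hfb using hlim
    -- f is conjugate-linear; build the Riesz representative p
    have hadd : ∀ y y' : H, f (y + y') = f y + f y' := by
      intro y y'
      refine tendsto_nhds_unique (hf (y + y')) ?_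
      have := (hf y).add (hf y')
      refine this.congr fun l => ?_
      rw [inner_add_left]
    have hsmul : ∀ (c : ℂ) (y : H), f (c • y) = (starRingEnd ℂ) c * f y := by
      intro c y
      refine tendsto_nhds_unique (hf (c • y)) ?_
      have := (hf y).const_mul ((starRingEnd ℂ) c)
      refine this.congr fun l => ?_
      rw [inner_smul_left]
    set glin : H →ₗ[ℂ] ℂ :=
      { toFun := fun y => (starRingEnd ℂ) (f y)
        map_add' := fun y y' => by simp only [hadd, map_add]
        map_smul' := fun c y => by
          simp only [hsmul, map_mul, Complex.conj_conj, RingHom.id_apply, smul_eq_mul] } with hglin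
    have hgb : ∀ y : H, ‖glin y‖ ≤ R * ‖y‖ := by
      intro y
      show ‖(starRingEnd ℂ) (f y)‖ ≤ R * ‖y‖
      rw [RCLike.norm_conj]
      exact hfb y
    set g : H →L[ℂ] ℂ := glin.mkContinuous R hgb with hg
    set p : H := (InnerProductSpace.toDual ℂ H).symm g with hp
    have hpy : ∀ y : H, ⟪y, p⟫_ℂ = f y := by
      intro y
      have h1 : ⟪p, y⟫_ℂ = g y := InnerProductSpace.toDual_symm_apply
      have h2' : ⟪y, p⟫_ℂ = (starRingEnd ℂ) (⟪p, y⟫_ℂ) := (inner_conj_symm y p).symm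
      rw [h2', h1]
      show (starRingEnd ℂ) ((starRingEnd ℂ) (f y)) = f y
      exact Complex.conj_conj _
    have htend : ∀ y : H, Tendsto (fun l => ⟪y, v l⟫_ℂ) U (𝓝 (⟪y, p⟫_ℂ)) := by
      intro y; rw [hpy]; exact hf y
    -- p lies in S₁
    have hS₁closed : IsClosed (S₁ : Set H) := Submodule.isClosed_topologicalClosure _
    haveI : CompleteSpace S₁ := hS₁closed.completeSpace_coe
    obtain ⟨q, hq, r, hr, hpqr⟩ := S₁.exists_add_mem_mem_orthogonal p
    have hvS₁ : ∀ l, v l ∈ S₁ := by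
      intro l
      apply Submodule.le_topologicalClosure
      exact Submodule.subset_span ⟨u l, x, rfl⟩
    have hrv : ∀ l, ⟪r, v l⟫_ℂ = 0 := by
      intro l
      rw [inner_eq_zero_symm]
      exact (Submodule.mem_orthogonal S₁ r).mp hr _ (hvS₁ l)
    have hrp : ⟪r, p⟫_ℂ = 0 := by
      have hconst : Tendsto (fun _ : ι => (0:ℂ)) U (𝓝 (⟪r, p⟫_ℂ)) :=
        (htend r).congr fun l => hrv l
      exact tendsto_nhds_unique hconst tendsto_const_nhds
    have hrq : ⟪r, q⟫_ℂ = 0 := by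
      rw [inner_eq_zero_symm]
      exact (Submodule.mem_orthogonal S₁ r).mp hr q hq
    have hr0 : r = 0 := by
      have : ⟪r, r⟫_ℂ = 0 := by
        have : ⟪r, p⟫_ℂ = ⟪r, q⟫_ℂ + ⟪r, r⟫_ℂ := by rw [hpqr, inner_add_right]
        rw [hrp, hrq] at this
        linear_combination -this
      exact inner_self_eq_zero.mp this
    have hpS₁ : p ∈ S₁ := by rw [hpqr, hr0, add_zero]; exact hq
    -- x - p is annihilated by every π a
    have hxp : x - p ∈ S₂ᗮ := by
      rw [h2]
      intro a
      have key : π a p = π a x := by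
        apply ext_inner_left ℂ
        intro y
        have e1 : ⟪y, π a p⟫_ℂ = ⟪ContinuousLinearMap.adjoint (π a) y, p⟫_ℂ := by
          rw [ContinuousLinearMap.adjoint_inner_left]
        have t1 : Tendsto (fun l => ⟪ContinuousLinearMap.adjoint (π a) y, v l⟫_ℂ) U
            (𝓝 (⟪ContinuousLinearMap.adjoint (π a) y, p⟫_ℂ)) := htend _
        have t1' : Tendsto (fun l => ⟪y, π a (v l)⟫_ℂ) U
            (𝓝 (⟪ContinuousLinearMap.adjoint (π a) y, p⟫_ℂ)) := by
          refine t1.congr fun l => ?_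
          rw [ContinuousLinearMap.adjoint_inner_left]
        have h1 : Tendsto (fun l => a * u l) atTop (𝓝 a) :=
          tendsto_iff_norm_sub_tendsto_zero.mpr (hu_right a)
        have hcont : Continuous fun b : A => π b x :=
          (ContinuousLinearMap.apply ℂ H x).continuous.comp π.continuous
        have t2 : Tendsto (fun l => π (a * u l) x) atTop (𝓝 (π a x)) :=
          (hcont.tendsto a).comp h1
        have t2' : Tendsto (fun l => π a (v l)) atTop (𝓝 (π a x)) := by
          refine t2.congr fun l => ?_
          rw [hπ, ContinuousLinearMap.mul_apply]
        have t3 : Tendsto (fun l => ⟪y, π a (v l)⟫_ℂ) U (𝓝 (⟪y, π a x⟫_ℂ)) := by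
          exact Filter.Tendsto.inner (𝕜 := ℂ) tendsto_const_nhds (t2'.mono_left hU)
        have := tendsto_nhds_unique t1' t3
        rw [e1, this]
      rw [map_sub, key, sub_self]
    -- conclude
    have : x = p + (x - p) := by abel
    rw [this]
    exact Submodule.add_mem_sup hpS₁ hxp
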